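/- Contour estimate at a simple pole on the imaginary axis: Let E be a complex Banach space, c ∈ ℂ with Re c = 0, r > 0, and U ⊆ ℂ an open set containing the closed disc of centre c and radius r. Let f : U ∖ {c} → E be analytic and suppose there is an analytic function g : U → E with g(λ) = (λ − c)·f(λ) for all λ ∈ U ∖ {c} (i.e. f has at most a simple pole at c). If ‖(Re λ)·f(λ)‖ ≤ K for every λ with |λ − c| = r, then ‖(1/(2πi)) ∮_{|λ−c|=r} f(λ) dλ‖ ≤ 2K. -/

import Mathlib

open Metric Complex

/-- Contour estimate at a simple pole on the imaginary axis: if `f` is analytic on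
`U \ {c}` (with `Re c = 0`), has at most a simple pole at `c` (witnessed by the
analytic function `g` with `g(λ) = (λ - c) f(λ)` off `c`), and
`‖(Re λ) • f(λ)‖ ≤ K` on the circle `|λ - c| = r`, then
`‖(1/(2πi)) ∮_{|λ-c|=r} f(λ) dλ‖ ≤ 2 K`. -/
theorem contour_estimate_simple_pole
    {E : Type*} [NormedAddCommGroup E] [NormedSpace ℂ E] [CompleteSpace E]
    (c : ℂ) (hc : c.re = 0) (r : ℝ) (hr : 0 < r)
    (U : Set ℂ) (hU : IsOpen U) (hball : closedBall c r ⊆ U)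
    (f : ℂ → E) (hf : DifferentiableOn ℂ f (U \ {c}))
    (g : ℂ → E) (hg : DifferentiableOn ℂ g U)
    (hfg : ∀ z ∈ U \ {c}, g z = (z - c) • f z)
    (K : ℝ) (hK : ∀ z : ℂ, ‖z - c‖ = r → ‖((z.re : ℂ)) • f z‖ ≤ K) :
    ‖(2 * Real.pi * Complex.I)⁻¹ • (∮ z in C(c, r), f z)‖ ≤ 2 * K := by
  have hπ : (2 * (Real.pi : ℂ) * Complex.I) ≠ 0 := by
    simp [Real.pi_ne_zero, Complex.I_ne_zero]
  -- basic facts about points on the sphere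
  have hsph : ∀ z ∈ sphere c r, ‖z - c‖ = r := by
    intro z hz
    simpa [Complex.dist_eq] using hz
  have hne : ∀ z ∈ sphere c r, z ≠ c := by
    intro z hz h
    have := hsph z hz
    rw [h] at this
    simp at this
    linarith
  have hmemU : ∀ z ∈ sphere c r, z ∈ U :=
    fun z hz => hball (sphere_subset_closedBall hz)
  have hgc : ContinuousOn g (closedBall c r) :=
    (hg.continuousOn).mono hball
  -- auxiliary functions
  set h1 : ℂ → E := fun z => (z - c)⁻¹ • g z with hh1
  set h2 : ℂ → E := fun z => ((z - c) / (r : ℂ) ^ 2) • g z with hh2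
  -- Step A : ∮ f = ∮ h1
  have hEq1 : Set.EqOn f h1 (sphere c r) := by
    intro z hz
    have hz' : z ∈ U \ {c} := ⟨hmemU z hz, hne z hz⟩
    have := hfg z hz'
    simp only [hh1, this, smul_smul]
    rw [inv_mul_cancel₀ (sub_ne_zero.mpr (hne z hz)), one_smul]
  have hA : (∮ z in C(c, r), f z) = ∮ z in C(c, r), h1 z :=
    circleIntegral.integral_congr hr.le hEq1
  -- Step B : Cauchy formula  ∮ h1 = (2πi) • g c
  have hdcc : DiffContOnCl ℂ g (ball c r) := by
    refine DifferentiableOn.diffContOnCl ?_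
    exact hg.mono (fun z hz => hball (by simpa using closure_ball_subset_closedBall hz))
  have hB : (∮ z in C(c, r), h1 z) = (2 * (Real.pi : ℂ) * Complex.I) • g c := by
    simpa [hh1] using hdcc.circleIntegral_sub_inv_smul (mem_ball_self hr)
  -- Step C : ∮ h2 = 0
  have hdiffh2 : DifferentiableOn ℂ h2 U := by
    apply DifferentiableOn.smul
    · exact (differentiableOn_id.sub (differentiableOn_const c)).div_const _
    · exact hg
  have hC : (∮ z in C(c, r), h2 z) = 0 := by
    refine circleIntegral_eq_zero_of_differentiable_on_off_countable hr.le
      (Set.countable_empty) (hdiffh2.continuousOn.mono hball) ?_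
    intro z hz
    have hzU : z ∈ U := hball (ball_subset_closedBall hz.1)
    exact (hdiffh2.differentiableAt (hU.mem_nhds hzU))
  -- integrability of h1 and h2 on the circle
  have hcont1 : ContinuousOn h1 (sphere c r) := by
    apply ContinuousOn.smul
    · exact ((continuousOn_id.sub continuousOn_const).inv₀
        (fun z hz => sub_ne_zero.mpr (hne z hz)))
    · exact hgc.mono sphere_subset_closedBall
  have hcont2 : ContinuousOn h2 (sphere c r) := by
    apply ContinuousOn.smul
    · exact (continuousOn_id.sub continuousOn_const).div_const _
    · exact hgc.mono sphere_subset_closedBall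
  have hint1 : CircleIntegrable h1 c r := hcont1.circleIntegrable hr.le
  have hint2 : CircleIntegrable h2 c r := hcont2.circleIntegrable hr.le
  -- Step D : combine
  have hD : (∮ z in C(c, r), (h1 z + h2 z)) = (2 * (Real.pi : ℂ) * Complex.I) • g c := by
    have hadd : (∮ z in C(c, r), (h1 z + h2 z))
        = (∮ z in C(c, r), h1 z) + ∮ z in C(c, r), h2 z := by
      simp only [circleIntegral, smul_add]
      exact intervalIntegral.integral_add hint1.out hint2.out
    rw [hadd, hB, hC, add_zero]
  -- Step E : pointwise bound on the sphere
  have hE : ∀ z ∈ sphere c r, ‖h1 z + h2 z‖ ≤ 2 * K / r := by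
    intro z hz
    have habs : ‖z - c‖ = r := hsph z hz
    have hzne : (z - c) ≠ 0 := sub_ne_zero.mpr (hne z hz)
    have hz' : z ∈ U \ {c} := ⟨hmemU z hz, hne z hz⟩
    have hgz : g z = (z - c) • f z := hfg z hz'
    have hwre : (z - c).re = z.re := by simp [hc]
    have hmulconj : (z - c) * (starRingEnd ℂ) (z - c) = (r : ℂ) ^ 2 := by
      rw [Complex.mul_conj]
      norm_cast
      rw [Complex.normSq_eq_norm_sq, habs]
    -- key identity : h1 z + h2 z = (2 * z.re / r^2) • ((z-c) • f z) rearranged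
    have hkey : h1 z + h2 z = ((2 * (z - c)) / (r : ℂ) ^ 2) • ((z.re : ℂ) • f z) := by
      simp only [hh1, hh2, hgz, smul_smul]
      rw [← add_smul]
      congr 1
      have hr2 : ((r : ℂ) ^ 2) ≠ 0 := by
        norm_cast
        positivity
      have hconj : (z - c) + (starRingEnd ℂ) (z - c) = 2 * (z.re : ℂ) := by
        rw [Complex.add_conj]
        norm_cast
        rw [hwre]
      have hr2' : (r:ℂ)^2 * ((r:ℂ)^2)⁻¹ = 1 := mul_inv_cancel₀ hr2
      rw [inv_mul_cancel₀ hzne]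
      linear_combination ((z - c) * hconj - hmulconj) * ((r:ℂ)^2)⁻¹ - hr2'
    rw [hkey, norm_smul]
    have hnormco : ‖(2 * (z - c)) / (r : ℂ) ^ 2‖ = 2 / r := by
      rw [norm_div, norm_mul, norm_pow]
      simp only [habs, Complex.norm_real, Real.norm_eq_abs, Complex.norm_two]
      rw [abs_of_pos hr]
      field_simp
    rw [hnormco]
    have hb := hK z habs
    calc 2 / r * ‖(z.re : ℂ) • f z‖ ≤ 2 / r * K := by
          apply mul_le_mul_of_nonneg_left hb
          positivity
      _ = 2 * K / r := by ring
  -- Step F : norm estimate of the integral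
  have hF : ‖(2 * (Real.pi : ℂ) * Complex.I) • g c‖ ≤ 2 * Real.pi * r * (2 * K / r) := by
    rw [← hD]
    exact circleIntegral.norm_integral_le_of_norm_le_const hr.le hE
  have hnorm2pi : ‖(2 * (Real.pi : ℂ) * Complex.I) • g c‖ = 2 * Real.pi * ‖g c‖ := by
    rw [norm_smul]
    simp [Complex.norm_real, abs_of_pos Real.pi_pos]
  have hgcb : ‖g c‖ ≤ 2 * K := by
    rw [hnorm2pi] at hF
    have h2pi : (0:ℝ) < 2 * Real.pi := by positivity
    have : 2 * Real.pi * r * (2 * K / r) = 2 * Real.pi * (2 * K) := by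
      field_simp
    rw [this] at hF
    exact le_of_mul_le_mul_left hF h2pi
  -- conclusion
  have hfinal : (2 * Real.pi * Complex.I)⁻¹ • (∮ z in C(c, r), f z) = g c := by
    rw [hA, hB, smul_smul]
    rw [inv_mul_cancel₀ hπ, one_smul]
  rw [hfinal]
  exact hgcb
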